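/- Let 0 < p < 1/2, 0 < ε < 1/2 − p, and 0 ≤ σ ≤ p + 2ε with σ < 1/2. For real pairs (a₀, a₁) with 0 ≤ a₀ ≤ 1−2σ, 0 ≤ a₁ ≤ 2σ, a₀+a₁ ∈ [p−ε, p+ε], and a₀+2σ−a₁ ∈ [p−ε, p+ε], the quantity (1−2σ)·h(a₀/(1−2σ)) + 2σ·h(a₁/(2σ)) is at most (1−2σ)·h((p−σ+ε)/(1−2σ)) + 2σ. -/
import Mathlib

/-- Binary entropy function (base-2 logarithm). -/
noncomputable def binH (q : ℝ) : ℝ := -q * Real.logb 2 q - (1 - q) * Real.logb 2 (1 - q)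

lemma binH_eq (q : ℝ) : binH q = Real.binEntropy q / Real.log 2 := by
  simp [binH, Real.binEntropy, Real.logb, Real.log_inv]
  ring

lemma binH_le_one (q : ℝ) : binH q ≤ 1 := by
  rw [binH_eq]
  rw [div_le_one (Real.log_pos (by norm_num))]
  exact Real.binEntropy_le_log_two

lemma binH_mono {a b : ℝ} (ha : 0 ≤ a) (hab : a ≤ b) (hb : b ≤ 1/2) :
    binH a ≤ binH b := by
  rw [binH_eq, binH_eq]
  have hlog : (0:ℝ) < Real.log 2 := Real.log_pos (by norm_num)
  gcongr
  apply Real.binEntropy_strictMonoOn.monotoneOn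
  · exact Set.mem_Icc.2 ⟨ha, by norm_num; linarith⟩
  · exact Set.mem_Icc.2 ⟨le_trans ha hab, by norm_num; linarith⟩
  · exact hab

theorem entropy_sum_max (p ε σ a₀ a₁ : ℝ)
    (hp0 : 0 < p) (hp1 : p < 1/2) (hε0 : 0 < ε) (hε1 : ε < 1/2 - p)
    (hσ0 : 0 ≤ σ) (hσ : σ ≤ p + 2*ε) (hσhalf : σ < 1/2)
    (ha0 : 0 ≤ a₀) (ha0' : a₀ ≤ 1 - 2*σ) (ha1 : 0 ≤ a₁) (ha1' : a₁ ≤ 2*σ)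
    (hsum1 : p - ε ≤ a₀ + a₁) (hsum2 : a₀ + a₁ ≤ p + ε)
    (hsum3 : p - ε ≤ a₀ + 2*σ - a₁) (hsum4 : a₀ + 2*σ - a₁ ≤ p + ε) :
    (1 - 2*σ) * binH (a₀ / (1 - 2*σ)) + 2*σ * binH (a₁ / (2*σ)) ≤
      (1 - 2*σ) * binH ((p - σ + ε) / (1 - 2*σ)) + 2*σ := by
  have hσ2 : 0 < 1 - 2*σ := by linarith
  have h1 : binH (a₀ / (1 - 2*σ)) ≤ binH ((p - σ + ε) / (1 - 2*σ)) := by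
    apply binH_mono (div_nonneg ha0 hσ2.le)
    · gcongr
      linarith
    · rw [div_le_iff₀ hσ2]; linarith
  have h2 : 2*σ * binH (a₁ / (2*σ)) ≤ 2*σ := by
    calc 2*σ * binH (a₁ / (2*σ)) ≤ 2*σ * 1 :=
          mul_le_mul_of_nonneg_left (binH_le_one _) (by linarith)
      _ = 2*σ := mul_one _
  nlinarith [mul_le_mul_of_nonneg_left h1 hσ2.le]
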